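/- If D is a minimal counterexample, then every vertex of D is incident with edges of all three colours. -/

import Mathlib

/-- A 3-coloured tournament on vertex type `V`: between any two distinct
vertices there is exactly one directed edge (`beats`), and `colour x y` gives
the colour (one of three: red, blue, green) of the edge from `x` to `y`
(meaningful when `beats x y` holds). -/
structure CTournament (V : Type*) where
  beats : V → V → Prop
  irrefl : ∀ v, ¬ beats v v
  asymm : ∀ v w, beats v w → ¬ beats w v
  total : ∀ v w, v ≠ w → beats v w ∨ beats w v
  colour : V → V → Fin 3

namespace CTournament

/-- The colour red. -/
def red : Fin 3 := 0
/-- The colour blue. -/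
def blue : Fin 3 := 1
/-- The colour green. -/
def green : Fin 3 := 2

variable {V : Type*} (T : CTournament V)

/-- `x` monochromatically dominates `y` in colour `c`: there is a directed
path (with at least one edge) from `x` to `y` all of whose edges have
colour `c`. -/
def Dom (c : Fin 3) (x y : V) : Prop :=
  Relation.TransGen (fun a b => T.beats a b ∧ T.colour a b = c) x y

/-- `x` monochromatically dominates `y` (in some colour). -/
def MDom (x y : V) : Prop := ∃ c, T.Dom c x y

/-- `x` monochromatically dominates `y` in colour `c` within the
subtournament induced on the vertex set `S`. -/
def DomIn (S : Set V) (c : Fin 3) (x y : V) : Prop :=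
  Relation.TransGen (fun a b => a ∈ S ∧ b ∈ S ∧ T.beats a b ∧ T.colour a b = c) x y

/-- `x` monochromatically dominates `y` within the subtournament induced on `S`. -/
def MDomIn (S : Set V) (x y : V) : Prop := ∃ c, T.DomIn S c x y

/-- `T` contains a `T_3`: three vertices spanning a cyclic triangle whose
three edges have three pairwise distinct colours. -/
def HasT3 : Prop :=
  ∃ a b c : V, T.beats a b ∧ T.beats b c ∧ T.beats c a ∧
    T.colour a b ≠ T.colour b c ∧ T.colour b c ≠ T.colour c a ∧
    T.colour a b ≠ T.colour c a

/-- Vertex `v` is incident with an edge of colour `c`. -/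
def IncidentColour (v : V) (c : Fin 3) : Prop :=
  ∃ w, (T.beats v w ∧ T.colour v w = c) ∨ (T.beats w v ∧ T.colour w v = c)

/-- `T` is a minimal counterexample: it contains no `T_3`, no vertex
monochromatically dominates every other vertex, and every proper nonempty
subset of the vertices spans a subtournament containing a vertex that
monochromatically dominates (within that subtournament) every other vertex
of the subset. -/
def MinimalCex : Prop :=
  ¬ T.HasT3 ∧
  (¬ ∃ x : V, ∀ y, y ≠ x → T.MDom x y) ∧
  ∀ S : Set V, S.Nonempty → S ≠ Set.univ →
    ∃ x ∈ S, ∀ y ∈ S, y ≠ x → T.MDomIn S x y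

/-- The permutation `σ` (sending every vertex to its successor) is a directed
Hamilton cycle of `T`: every vertex beats its successor, and all vertices lie
on a single cycle of `σ`. -/
def IsHamCycle (σ : Equiv.Perm V) : Prop :=
  (∀ v, T.beats v (σ v)) ∧ ∀ v w : V, ∃ n : ℕ, (⇑σ)^[n] v = w

/-- The domination property of the Hamilton cycle `σ`: every vertex
monochromatically dominates every vertex other than itself and its
predecessor on the cycle, and no vertex monochromatically dominates its
predecessor. -/
def HamDomProp (σ : Equiv.Perm V) : Prop :=
  (∀ x y : V, y ≠ x → y ≠ σ.symm x → T.MDom x y) ∧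
  ∀ x : V, ¬ T.MDom x (σ.symm x)

/-- The vertex set of the directed subpath `xCy` of the Hamilton cycle whose
successor permutation is `σ`: all vertices reachable from `x` along the cycle
no later than the first visit of `y`. -/
def PathSet (σ : Equiv.Perm V) (x y : V) : Set V :=
  {z | ∃ k : ℕ, (⇑σ)^[k] x = z ∧ ∀ j < k, (⇑σ)^[j] x ≠ y}

/-- `R^+(x)`: the vertices to which `x` sends a red edge. -/
def Rplus (x : V) : Set V := {v | T.beats x v ∧ T.colour x v = red}
/-- `R^-(x)`: the vertices from which `x` receives a red edge. -/
def Rminus (x : V) : Set V := {v | T.beats v x ∧ T.colour v x = red}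
/-- `B^+(x)`: the vertices to which `x` sends a blue edge. -/
def Bplus (x : V) : Set V := {v | T.beats x v ∧ T.colour x v = blue}
/-- `B^-(x)`: the vertices from which `x` receives a blue edge. -/
def Bminus (x : V) : Set V := {v | T.beats v x ∧ T.colour v x = blue}
/-- `R_r^+(x) = {v ∈ R^+(x) : v monochromatically dominates x in red}`. -/
def Rrplus (x : V) : Set V := {v ∈ T.Rplus x | T.Dom red v x}
/-- `R_r^-(x) = {v ∈ R^-(x) : x monochromatically dominates v in red}`. -/
def Rrminus (x : V) : Set V := {v ∈ T.Rminus x | T.Dom red x v}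
/-- `B_b^+(x) = {v ∈ B^+(x) : v monochromatically dominates x in blue}`. -/
def Bbplus (x : V) : Set V := {v ∈ T.Bplus x | T.Dom blue v x}
/-- `B_b^-(x) = {v ∈ B^-(x) : x monochromatically dominates v in blue}`. -/
def Bbminus (x : V) : Set V := {v ∈ T.Bminus x | T.Dom blue x v}

end CTournament
private lemma transGen_first {α : Type*} {r : α → α → Prop} {a b : α}
    (h : Relation.TransGen r a b) : ∃ c, r a c := by
  induction h with
  | single h => exact ⟨_, h⟩
  | tail _ _ ih => exact ih

private lemma transGen_last {α : Type*} {r : α → α → Prop} {a b : α}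
    (h : Relation.TransGen r a b) : ∃ c, r c b := by
  cases h with
  | single h => exact ⟨_, h⟩
  | tail _ h2 => exact ⟨_, h2⟩

private lemma fin3_pigeon1 : ∀ (c₀ c c' d : Fin 3),
    c ≠ c₀ → c' ≠ c₀ → d ≠ c₀ → c ≠ c' → d = c ∨ d = c' := by decide

private lemma fin3_pigeon2 : ∀ (c₀ x y z : Fin 3),
    x ≠ c₀ → y ≠ c₀ → z ≠ c₀ → x ≠ y → x ≠ z → y = z := by
  intro c₀ x y z h1 h2 h3 h4 h5
  fin_cases c₀ <;> fin_cases x <;> fin_cases y <;> fin_cases z <;> simp_all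

namespace CTournament

variable {V : Type*}

private lemma dom_of_edge (T : CTournament V) {x y : V} (h : T.beats x y) :
    T.Dom (T.colour x y) x y :=
  Relation.TransGen.single ⟨h, rfl⟩

private lemma dom_trans (T : CTournament V) {c : Fin 3} {x y z : V}
    (h1 : T.Dom c x y) (h2 : T.Dom c y z) : T.Dom c x z :=
  Relation.TransGen.trans h1 h2

private lemma dom_tail (T : CTournament V) {c : Fin 3} {x y z : V}
    (h1 : T.Dom c x y) (hb : T.beats y z) (hc : T.colour y z = c) : T.Dom c x z :=
  Relation.TransGen.tail h1 ⟨hb, hc⟩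

private lemma domIn_dom (T : CTournament V) {S : Set V} {c : Fin 3} {x y : V}
    (h : T.DomIn S c x y) : T.Dom c x y :=
  Relation.TransGen.mono (fun a b (hab : a ∈ S ∧ b ∈ S ∧ T.beats a b ∧ T.colour a b = c) =>
    (⟨hab.2.2.1, hab.2.2.2⟩ : T.beats a b ∧ T.colour a b = c)) x y h

private lemma mDomIn_mdom (T : CTournament V) {S : Set V} {x y : V}
    (h : T.MDomIn S x y) : T.MDom x y :=
  ⟨h.choose, domIn_dom T h.choose_spec⟩

private lemma aux_false [Fintype V] (T : CTournament V)
    (hT3 : ¬ T.HasT3)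
    (hnodom : ¬ ∃ x : V, ∀ y, y ≠ x → T.MDom x y)
    (hmin : ∀ S : Set V, S.Nonempty → S ≠ Set.univ →
      ∃ x ∈ S, ∀ y ∈ S, y ≠ x → T.MDomIn S x y)
    (v₀ : V) (c₀ : Fin 3)
    (hout : ∀ w, T.beats v₀ w → T.colour v₀ w ≠ c₀)
    (hin : ∀ w, T.beats w v₀ → T.colour w v₀ ≠ c₀) : False := by
  classical
  -- every vertex fails to dominate someone
  have hnd : ∀ x : V, ∃ y, y ≠ x ∧ ¬ T.MDom x y := by
    intro x
    by_contra hc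
    push_neg at hc
    exact hnodom ⟨x, hc⟩
  -- descent step
  have hstep : ∀ u : V, ∃ w, T.MDom w u ∧ ¬ T.MDom u w := by
    intro u
    obtain ⟨y₀, hy₀ne, hy₀⟩ := hnd u
    by_cases hU : ({y | y ≠ u ∧ ¬ T.MDom u y} ∪ {u} : Set V) = Set.univ
    · have hAuniv : ({y | y ≠ u ∧ ¬ T.MDom u y} : Set V) ≠ Set.univ := by
        intro hEq
        have : u ∈ ({y | y ≠ u ∧ ¬ T.MDom u y} : Set V) := hEq ▸ Set.mem_univ u
        exact this.1 rfl
      obtain ⟨x, hxA, hdom⟩ := hmin {y | y ≠ u ∧ ¬ T.MDom u y} ⟨y₀, hy₀ne, hy₀⟩ hAuniv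
      refine ⟨x, ?_, hxA.2⟩
      have hnb : ¬ T.beats u x := fun hb => hxA.2 ⟨_, dom_of_edge T hb⟩
      rcases T.total x u hxA.1 with hb | hb
      · exact ⟨_, dom_of_edge T hb⟩
      · exact absurd hb hnb
    · obtain ⟨x, hxmem, hdom⟩ := hmin _ ⟨u, Or.inr rfl⟩ hU
      by_cases hxu : x = u
      · subst hxu
        have := hdom y₀ (Or.inl ⟨hy₀ne, hy₀⟩) hy₀ne
        exact absurd (mDomIn_mdom T this) hy₀
      · have hxA : x ∈ ({y | y ≠ u ∧ ¬ T.MDom u y} : Set V) := hxmem.resolve_right hxu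
        exact ⟨x, mDomIn_mdom T (hdom u (Or.inr rfl) (fun h => hxu h.symm)), hxA.2⟩
  -- infinite descent sequence
  obtain ⟨useq, huseq0, huseq⟩ :
      ∃ u : ℕ → V, u 0 = v₀ ∧ ∀ k, T.MDom (u (k+1)) (u k) ∧ ¬ T.MDom (u k) (u (k+1)) := by
    refine ⟨fun k => Nat.rec v₀ (fun _ p => (hstep p).choose) k, rfl, fun k => ?_⟩
    exact (hstep _).choose_spec
  -- extract a cycle
  have hcyc : ∃ m, 0 < m ∧ ∃ t : ℕ → V, t m = t 0 ∧
      ∀ k, k < m → T.MDom (t k) (t (k+1)) ∧ ¬ T.MDom (t (k+1)) (t k) := by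
    obtain ⟨i, j, hne, heq⟩ := Finite.exists_ne_map_eq_of_infinite useq
    obtain ⟨i, j, hij, heq⟩ : ∃ i j, i < j ∧ useq i = useq j := by
      rcases lt_or_gt_of_ne hne with h | h
      exacts [⟨i, j, h, heq⟩, ⟨j, i, h, heq.symm⟩]
    refine ⟨j - i, by omega, fun k => useq (j - k), ?_, fun k hk => ?_⟩
    · show useq (j - (j - i)) = useq (j - 0)
      rw [Nat.sub_sub_self hij.le, Nat.sub_zero]
      exact heq
    · have h1 : j - k = (j - (k+1)) + 1 := by omega
      constructor
      · show T.MDom (useq (j - k)) (useq (j - (k+1)))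
        rw [h1]; exact (huseq _).1
      · show ¬ T.MDom (useq (j - (k+1))) (useq (j - k))
        rw [h1]; exact (huseq _).2
  obtain ⟨n, ⟨hnpos, t, twrap, tprop⟩, hnmin⟩ :
      ∃ n, (0 < n ∧ ∃ t : ℕ → V, t n = t 0 ∧
          ∀ k, k < n → T.MDom (t k) (t (k+1)) ∧ ¬ T.MDom (t (k+1)) (t k)) ∧
        ∀ m, m < n → ¬(0 < m ∧ ∃ t : ℕ → V, t m = t 0 ∧
          ∀ k, k < m → T.MDom (t k) (t (k+1)) ∧ ¬ T.MDom (t (k+1)) (t k)) :=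
    ⟨Nat.find hcyc, Nat.find_spec hcyc, fun m hm => Nat.find_min hcyc hm⟩
  -- n ≥ 3
  have hn3 : 3 ≤ n := by
    rcases Nat.lt_or_ge n 3 with hlt | hge
    · exfalso
      interval_cases n
      · have h := tprop 0 (by omega)
        rw [show (1:ℕ) = 0 + 1 from rfl] at twrap
        rw [twrap] at h
        exact h.2 h.1
      · have ha := tprop 0 (by omega)
        have hb := tprop 1 (by omega)
        rw [show (2:ℕ) = 1 + 1 from rfl] at twrap
        rw [twrap] at hb
        exact ha.2 hb.1
    · exact hge
  -- injectivity on [0, n)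
  have tinj : ∀ k l, k < n → l < n → t k = t l → k = l := by
    intro k l hk hl heq
    by_contra hne
    obtain ⟨k, l, hkl, hln, heq⟩ : ∃ k l, k < l ∧ l < n ∧ t k = t l := by
      rcases lt_or_gt_of_ne hne with h | h
      exacts [⟨k, l, h, hl, heq⟩, ⟨l, k, h, hk, heq.symm⟩]
    refine hnmin (l - k) (by omega) ⟨by omega, fun i => t (k + i), ?_, fun i hi => ?_⟩
    · show t (k + (l - k)) = t (k + 0)
      rw [Nat.add_sub_cancel' hkl.le, Nat.add_zero]
      exact heq.symm
    · have h2 : k + (i+1) = (k+i) + 1 := by omega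
      show T.MDom (t (k+i)) (t (k + (i+1))) ∧ ¬ T.MDom (t (k + (i+1))) (t (k+i))
      rw [h2]
      exact tprop (k+i) (by omega)
  -- surjectivity
  have tsurj : ∀ w : V, ∃ k, k < n ∧ t k = w := by
    by_contra hc
    push_neg at hc
    obtain ⟨w₀, hw₀⟩ := hc
    have hSne : ({w | ∃ k, k < n ∧ t k = w} : Set V).Nonempty := ⟨t 0, 0, hnpos, rfl⟩
    have hSuniv : ({w | ∃ k, k < n ∧ t k = w} : Set V) ≠ Set.univ := by
      intro hEq
      obtain ⟨k, hk, hkw⟩ : w₀ ∈ ({w | ∃ k, k < n ∧ t k = w} : Set V) := hEq ▸ Set.mem_univ w₀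
      exact hw₀ k hk hkw
    obtain ⟨x, hxS, hdom⟩ := hmin _ hSne hSuniv
    obtain ⟨l, hl, hx⟩ := hxS
    rcases Nat.eq_zero_or_pos l with h0 | hpos
    · have hmem : t (n-1) ∈ ({w | ∃ k, k < n ∧ t k = w} : Set V) := ⟨n-1, by omega, rfl⟩
      have hne' : t (n-1) ≠ x := by
        rw [← hx, h0]
        intro hEq
        have := tinj (n-1) 0 (by omega) (by omega) hEq
        omega
      have hmd := mDomIn_mdom T (hdom _ hmem hne')
      rw [← hx, h0] at hmd
      have h2 := (tprop (n-1) (by omega)).2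
      rw [show (n-1)+1 = n by omega, twrap] at h2
      exact h2 hmd
    · have hmem : t (l-1) ∈ ({w | ∃ k, k < n ∧ t k = w} : Set V) := ⟨l-1, by omega, rfl⟩
      have hne' : t (l-1) ≠ x := by
        rw [← hx]
        intro hEq
        have := tinj (l-1) l (by omega) hl hEq
        omega
      have hmd := mDomIn_mdom T (hdom _ hmem hne')
      rw [← hx] at hmd
      have h2 := (tprop (l-1) (by omega)).2
      rw [show (l-1)+1 = l by omega] at h2
      exact h2 hmd
  obtain ⟨a, han, hta⟩ := tsurj v₀
  -- the rotated Hamiltonian sequence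
  obtain ⟨s, hs0, hsn, sinj, backw⟩ :
      ∃ s : ℕ → V, s 0 = v₀ ∧ s n = s 0 ∧
        (∀ k l, k < n → l < n → s k = s l → k = l) ∧
        (∀ k, ¬ T.MDom (s (k+1)) (s k)) := by
    refine ⟨fun k => t ((a + k) % n), ?_, ?_, ?_, ?_⟩
    · show t ((a + 0) % n) = v₀
      rw [Nat.add_zero, Nat.mod_eq_of_lt han]
      exact hta
    · show t ((a + n) % n) = t ((a + 0) % n)
      rw [Nat.add_mod_right, Nat.add_zero]
    · intro k l hk hl heq
      have h1 : (a+k) % n < n := Nat.mod_lt _ (by omega)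
      have h2 : (a+l) % n < n := Nat.mod_lt _ (by omega)
      have h3 := tinj _ _ h1 h2 heq
      have h5 : k % n = l % n := Nat.ModEq.add_left_cancel (Nat.ModEq.refl a) h3
      rwa [Nat.mod_eq_of_lt hk, Nat.mod_eq_of_lt hl] at h5
    · intro k
      have hr : (a+k) % n < n := Nat.mod_lt _ (by omega)
      have hstep1 : (a + (k+1)) % n = ((a+k) % n + 1) % n := by
        rw [show a + (k+1) = (a+k) + 1 by omega, Nat.add_mod (a+k) 1 n,
          Nat.mod_eq_of_lt (show 1 < n by omega)]
      show ¬ T.MDom (t ((a+(k+1)) % n)) (t ((a+k) % n))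
      by_cases hlt : (a+k) % n + 1 < n
      · rw [hstep1, Nat.mod_eq_of_lt hlt]
        exact (tprop _ hr).2
      · have hEq : (a+k) % n = n - 1 := by omega
        rw [hstep1, hEq, show n-1+1 = n by omega, Nat.mod_self, ← twrap]
        have h2 := (tprop (n-1) (by omega)).2
        rwa [show (n-1)+1 = n by omega] at h2
  clear hta han twrap tprop tinj hnmin huseq huseq0 hcyc hnd hstep hnodom
  -- interval dominator lemma
  have int_dom : ∀ b c i, b ≤ c → c ≤ n → (c < n ∨ 1 ≤ b) →
      (∃ w : V, ∀ i', b ≤ i' → i' ≤ c → s i' ≠ w) →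
      b < i → i ≤ c →
      T.MDomIn {w | ∃ i', b ≤ i' ∧ i' ≤ c ∧ s i' = w} (s b) (s i) := by
    intro b c i hbc hcn hb0 hprop hbi hic
    have hSne : ({w | ∃ i', b ≤ i' ∧ i' ≤ c ∧ s i' = w} : Set V).Nonempty :=
      ⟨s b, b, le_refl b, hbc, rfl⟩
    have hSuniv : ({w | ∃ i', b ≤ i' ∧ i' ≤ c ∧ s i' = w} : Set V) ≠ Set.univ := by
      obtain ⟨w, hw⟩ := hprop
      intro hEq
      obtain ⟨i', h1, h2, h3⟩ : w ∈ ({w | ∃ i', b ≤ i' ∧ i' ≤ c ∧ s i' = w} : Set V) :=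
        hEq ▸ Set.mem_univ w
      exact hw i' h1 h2 h3
    obtain ⟨x, hxS, hdom⟩ := hmin _ hSne hSuniv
    obtain ⟨i₀, hi₀1, hi₀2, hx⟩ := hxS
    have hi₀b : i₀ = b := by
      by_contra hne
      have hi₀b' : b < i₀ := by omega
      have hmem : s (i₀ - 1) ∈ ({w | ∃ i', b ≤ i' ∧ i' ≤ c ∧ s i' = w} : Set V) :=
        ⟨i₀ - 1, by omega, by omega, rfl⟩
      have hney : s (i₀ - 1) ≠ x := by
        rw [← hx]
        intro hEq
        rcases Nat.lt_or_ge i₀ n with hlt | hge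
        · have := sinj _ _ (by omega) hlt hEq
          omega
        · have hi₀n : i₀ = n := by omega
          rw [hi₀n, hsn] at hEq
          have := sinj (n-1) 0 (by omega) (by omega) hEq
          omega
      have hmd := mDomIn_mdom T (hdom _ hmem hney)
      rw [← hx] at hmd
      have h2 := backw (i₀ - 1)
      rw [show (i₀ - 1) + 1 = i₀ by omega] at h2
      exact h2 hmd
    have hxb : x = s b := by rw [← hx, hi₀b]
    have hne2 : s i ≠ x := by
      rw [hxb]
      intro hEq
      rcases Nat.lt_or_ge i n with hlt | hge
      · have := sinj _ _ hlt (by omega) hEq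
        omega
      · have hin' : i = n := by omega
        rcases hb0 with hcase | hcase
        · omega
        · rw [hin', hsn] at hEq
          have := sinj 0 b (by omega) (by omega) hEq
          omega
    have hres := hdom (s i) ⟨i, by omega, hic, rfl⟩ hne2
    rwa [hxb] at hres
  -- colours of paths at v₀ avoid c₀
  have dom_v_ne : ∀ (c : Fin 3) (z : V), T.Dom c v₀ z → c ≠ c₀ := by
    intro c z hd
    obtain ⟨w, hw⟩ := transGen_first hd
    exact fun hEq => hout w hw.1 (hEq ▸ hw.2)
  have dom_to_v_ne : ∀ (c : Fin 3) (z : V), T.Dom c z v₀ → c ≠ c₀ := by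
    intro c z hd
    obtain ⟨w, hw⟩ := transGen_last hd
    exact fun hEq => hin w hw.1 (hEq ▸ hw.2)
  have backw' : ∀ j, 1 ≤ j → ∀ c, ¬ T.Dom c (s j) (s (j-1)) := by
    intro j hj c hd
    have h2 := backw (j-1)
    rw [show (j-1)+1 = j by omega] at h2
    exact h2 ⟨c, hd⟩
  -- existence of dominating colours
  have f_ex : ∀ j, 1 ≤ j → j ≤ n - 2 → ∃ c, T.Dom c v₀ (s j) := by
    intro j h1 h2
    have hprop : ∃ w : V, ∀ i', 0 ≤ i' → i' ≤ j → s i' ≠ w := by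
      refine ⟨s (n-1), fun i' _ hi' hEq => ?_⟩
      have := sinj i' (n-1) (by omega) (by omega) hEq
      omega
    have hres := int_dom 0 j j (by omega) (by omega) (Or.inl (by omega)) hprop (by omega) le_rfl
    obtain ⟨c, hc⟩ : ∃ c, T.DomIn _ c (s 0) (s j) := hres
    refine ⟨c, ?_⟩
    have := domIn_dom T hc
    rwa [hs0] at this
  have g_ex : ∀ j, 2 ≤ j → j ≤ n - 1 → ∃ c, T.Dom c (s j) v₀ := by
    intro j h1 h2
    have hprop : ∃ w : V, ∀ i', j ≤ i' → i' ≤ n → s i' ≠ w := by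
      refine ⟨s 1, fun i' hi1 hi2 hEq => ?_⟩
      rcases Nat.lt_or_ge i' n with hlt | hge
      · have := sinj i' 1 hlt (by omega) hEq
        omega
      · have hi'n : i' = n := by omega
        rw [hi'n, hsn] at hEq
        have := sinj 0 1 (by omega) (by omega) hEq
        omega
    have hres := int_dom j n n (by omega) le_rfl (Or.inr (by omega)) hprop (by omega) le_rfl
    obtain ⟨c, hc⟩ : ∃ c, T.DomIn _ c (s j) (s n) := hres
    refine ⟨c, ?_⟩
    have := domIn_dom T hc
    rwa [hsn, hs0] at this
  -- uniqueness
  have f_uniq : ∀ j, 1 ≤ j → j ≤ n - 2 → ∀ c c', T.Dom c v₀ (s j) → T.Dom c' v₀ (s j) → c = c' := by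
    intro j h1 h2 c c' hc hc'
    by_contra hne
    obtain ⟨d, hd⟩ := g_ex (j+1) (by omega) (by omega)
    have hdc : d ≠ c₀ := dom_to_v_ne d _ hd
    have hback := backw' (j+1) (by omega) d
    rw [show j+1-1 = j by omega] at hback
    rcases fin3_pigeon1 c₀ c c' d (dom_v_ne c _ hc) (dom_v_ne c' _ hc') hdc hne with h | h
    · exact hback (dom_trans T hd (by rw [h]; exact hc))
    · exact hback (dom_trans T hd (by rw [h]; exact hc'))
  have g_uniq : ∀ j, 2 ≤ j → j ≤ n - 1 → ∀ c c', T.Dom c (s j) v₀ → T.Dom c' (s j) v₀ → c = c' := by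
    intro j h1 h2 c c' hc hc'
    by_contra hne
    obtain ⟨d, hd⟩ := f_ex (j-1) (by omega) (by omega)
    have hdc : d ≠ c₀ := dom_v_ne d _ hd
    have hback := backw' j (by omega) d
    rcases fin3_pigeon1 c₀ c c' d (dom_to_v_ne c _ hc) (dom_to_v_ne c' _ hc') hdc hne with h | h
    · exact hback (dom_trans T (by rw [h]; exact hc) hd)
    · exact hback (dom_trans T (by rw [h]; exact hc') hd)
  have fg_ne : ∀ j, 2 ≤ j → j ≤ n - 1 → ∀ c c',
      T.Dom c v₀ (s (j-1)) → T.Dom c' (s j) v₀ → c ≠ c' := by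
    intro j h1 h2 c c' hc hc' hEq
    exact backw' j (by omega) c (dom_trans T (by rw [hEq]; exact hc') hc)
  -- the colour functions
  have hfcex : ∀ j : ℕ, ∃ c : Fin 3, 1 ≤ j → j ≤ n - 2 → T.Dom c v₀ (s j) := by
    intro j
    by_cases hj : 1 ≤ j ∧ j ≤ n - 2
    · obtain ⟨c, hc⟩ := f_ex j hj.1 hj.2
      exact ⟨c, fun _ _ => hc⟩
    · exact ⟨c₀, fun h1 h2 => absurd ⟨h1, h2⟩ hj⟩
  choose fc hfc using hfcex
  have hgcex : ∀ j : ℕ, ∃ c : Fin 3, 2 ≤ j → j ≤ n - 1 → T.Dom c (s j) v₀ := by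
    intro j
    by_cases hj : 2 ≤ j ∧ j ≤ n - 1
    · obtain ⟨c, hc⟩ := g_ex j hj.1 hj.2
      exact ⟨c, fun _ _ => hc⟩
    · exact ⟨c₀, fun h1 h2 => absurd ⟨h1, h2⟩ hj⟩
  choose gc hgc using hgcex
  have fc_uniq : ∀ j, 1 ≤ j → j ≤ n - 2 → ∀ c, T.Dom c v₀ (s j) → c = fc j :=
    fun j h1 h2 c hc => f_uniq j h1 h2 c (fc j) hc (hfc j h1 h2)
  have gc_uniq : ∀ j, 2 ≤ j → j ≤ n - 1 → ∀ c, T.Dom c (s j) v₀ → c = gc j :=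
    fun j h1 h2 c hc => g_uniq j h1 h2 c (gc j) hc (hgc j h1 h2)
  have fc_ne : ∀ j, 1 ≤ j → j ≤ n - 2 → fc j ≠ c₀ := fun j h1 h2 => dom_v_ne _ _ (hfc j h1 h2)
  have gc_ne : ∀ j, 2 ≤ j → j ≤ n - 1 → gc j ≠ c₀ := fun j h1 h2 => dom_to_v_ne _ _ (hgc j h1 h2)
  have fgc_ne : ∀ j, 2 ≤ j → j ≤ n - 1 → fc (j-1) ≠ gc j :=
    fun j h1 h2 => fg_ne j h1 h2 _ _ (hfc (j-1) (by omega) (by omega)) (hgc j h1 h2)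
  have fc_col : ∀ j, 1 ≤ j → j ≤ n - 2 → T.beats v₀ (s j) → T.colour v₀ (s j) = fc j :=
    fun j h1 h2 hb => fc_uniq j h1 h2 _ (dom_of_edge T hb)
  have gc_col : ∀ j, 2 ≤ j → j ≤ n - 1 → T.beats (s j) v₀ → T.colour (s j) v₀ = gc j :=
    fun j h1 h2 hb => gc_uniq j h1 h2 _ (dom_of_edge T hb)
  have no_out_n1 : ¬ T.beats v₀ (s (n-1)) := by
    intro hb
    have hmd : T.MDom (s n) (s (n-1)) := by
      rw [hsn, hs0]
      exact ⟨_, dom_of_edge T hb⟩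
    have h2 := backw (n-1)
    rw [show n-1+1 = n by omega] at h2
    exact h2 hmd
  have v_beats_1 : T.beats v₀ (s 1) := by
    have h01 : v₀ ≠ s 1 := by
      rw [← hs0]
      intro hEq
      have := sinj 0 1 (by omega) (by omega) hEq
      omega
    rcases T.total v₀ (s 1) h01 with hb | hb
    · exact hb
    · exfalso
      have hmd : T.MDom (s (0+1)) (s 0) := by
        rw [hs0]
        exact ⟨_, dom_of_edge T hb⟩
      exact backw 0 hmd
  -- the main block-propagation induction
  have main : ∀ d b, 1 ≤ b → b ≤ n - 2 → n - 1 - b ≤ d → T.beats v₀ (s b) →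
      (b = 1 ∨ (2 ≤ b ∧ fc (b-1) ≠ fc b)) → False := by
    intro d
    induction d with
    | zero =>
      intro b h1 h2 h3 _ _
      omega
    | succ d ih =>
      intro b hb1 hb2 hbd hbeats hstart
      obtain ⟨b', hb'1, hb'2, hconst, hend⟩ :
          ∃ b', b < b' ∧ b' ≤ n - 1 ∧ (∀ i, b ≤ i → i < b' → fc i = fc b) ∧
            ((b' ≤ n - 2 ∧ fc b' ≠ fc b) ∨ b' = n - 1) := by
        by_cases hP : ∃ k, b < k ∧ k ≤ n - 2 ∧ fc k ≠ fc b
        · obtain ⟨hf1, hf2, hf3⟩ := Nat.find_spec hP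
          refine ⟨Nat.find hP, hf1, by omega, ?_, Or.inl ⟨hf2, hf3⟩⟩
          intro i hi1 hi2
          rcases Nat.eq_or_lt_of_le hi1 with hcase | hcase
          · rw [← hcase]
          · by_contra hne
            exact Nat.find_min hP hi2 ⟨hcase, by omega, hne⟩
        · push_neg at hP
          refine ⟨n - 1, by omega, le_rfl, ?_, Or.inr rfl⟩
          intro i hi1 hi2
          rcases Nat.eq_or_lt_of_le hi1 with hcase | hcase
          · rw [← hcase]
          · exact hP i hcase (by omega)
      have hIprop : ∃ w : V, ∀ i', b ≤ i' → i' ≤ b' → s i' ≠ w := by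
        refine ⟨v₀, fun i' h1' h2' hEq => ?_⟩
        rw [← hs0] at hEq
        have := sinj i' 0 (by omega) (by omega) hEq
        omega
      obtain ⟨χ, hχpath⟩ : ∃ χ, T.DomIn {w | ∃ i', b ≤ i' ∧ i' ≤ b' ∧ s i' = w} χ (s b) (s b') :=
        int_dom b b' b' (by omega) (by omega) (Or.inr hb1) hIprop hb'1 le_rfl
      have hχne : χ ≠ fc b := by
        intro hEq
        have hdom' : T.Dom χ v₀ (s b') :=
          dom_trans T (by rw [hEq]; exact hfc b hb1 hb2) (domIn_dom T hχpath)
        rcases hend with ⟨hb'n2, hfne⟩ | hb'n1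
        · refine hfne ?_
          rw [← fc_uniq b' (by omega) hb'n2 χ hdom', hEq]
        · rw [hb'n1] at hdom'
          have hmd : T.MDom (s n) (s (n-1)) := by
            rw [hsn, hs0]
            exact ⟨χ, hdom'⟩
          have h2 := backw (n-1)
          rw [show n-1+1 = n by omega] at h2
          exact h2 hmd
      have hb'beats : T.beats v₀ (s b') := by
        by_contra hnb
        have stepcore : ∀ y z : V, T.beats v₀ y →
            ((∃ i', b ≤ i' ∧ i' ≤ b' ∧ s i' = y) ∧ (∃ i', b ≤ i' ∧ i' ≤ b' ∧ s i' = z) ∧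
              T.beats y z ∧ T.colour y z = χ) →
            T.Dom χ (s b) z →
            T.beats v₀ z := by
          intro y z hvy hrel hpre
          obtain ⟨⟨iy, hiy1, hiy2, hys⟩, ⟨iz, hiz1, hiz2, hzs⟩, hbyz, hcyz⟩ := hrel
          by_cases hv0z : T.beats v₀ z
          · exact hv0z
          exfalso
          have hzv : z ≠ v₀ := by
            rw [← hzs, ← hs0]
            intro hEq
            have := sinj iz 0 (by omega) (by omega) hEq
            omega
          have hbzv : T.beats z v₀ := (T.total z v₀ hzv).resolve_right hv0z
          have hizb : b < iz := by
            rcases Nat.eq_or_lt_of_le hiz1 with hcase | hcase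
            · exfalso
              rw [← hcase] at hzs
              rw [hzs] at hbeats
              exact T.asymm _ _ hbeats hbzv
            · exact hcase
          have hczv : T.colour z v₀ = gc iz := by
            rw [← hzs]
            exact gc_col iz (by omega) (by omega) (by rw [hzs]; exact hbzv)
          have hiyb' : iy < b' := by
            rcases Nat.eq_or_lt_of_le hiy2 with hcase | hcase
            · exfalso
              rw [hcase] at hys
              rw [← hys] at hvy
              exact hnb hvy
            · exact hcase
          have hcvy : T.colour v₀ y = fc b := by
            rw [← hys, fc_col iy (by omega) (by omega) (by rw [hys]; exact hvy)]
            exact hconst iy hiy1 hiyb'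
          have hgfne : gc iz ≠ fc b := by
            have h1 := fgc_ne iz (by omega) (by omega)
            have h2 : fc (iz-1) = fc b := hconst (iz-1) (by omega) (by omega)
            rw [h2] at h1
            exact fun hEq => h1 hEq.symm
          by_cases hχg : χ = gc iz
          · have hdomv : T.Dom χ (s b) v₀ :=
              dom_tail T hpre hbzv (by rw [hczv, hχg])
            rcases hstart with hb1' | ⟨hb2', hbne⟩
            · refine backw' 1 (by omega) χ ?_
              rw [show (1:ℕ)-1 = 0 from rfl, hs0]
              rw [hb1'] at hdomv
              exact hdomv
            · have hχgb : χ = gc b := gc_uniq b hb2' (by omega) χ hdomv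
              have hx1 : gc b ≠ fc (b-1) := fun hEq => (fgc_ne b hb2' (by omega)) hEq.symm
              have hx2 : gc b ≠ fc b := by
                rw [← hχgb, hχg]
                exact hgfne
              exact hbne (fin3_pigeon2 c₀ (gc b) (fc (b-1)) (fc b)
                (gc_ne b hb2' (by omega)) (fc_ne (b-1) (by omega) (by omega))
                (fc_ne b hb1 hb2) hx1 hx2)
          · refine hT3 ⟨v₀, y, z, hvy, hbyz, hbzv, ?_, ?_, ?_⟩
            · rw [hcvy, hcyz]
              exact fun hEq => hχne hEq.symm
            · rw [hcyz, hczv]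
              exact hχg
            · rw [hcvy, hczv]
              exact fun hEq => hgfne hEq.symm
        have prop : ∀ z, T.DomIn {w | ∃ i', b ≤ i' ∧ i' ≤ b' ∧ s i' = w} χ (s b) z →
            T.beats v₀ z := by
          intro z hz
          replace hz : Relation.TransGen (fun p q =>
            p ∈ {w | ∃ i', b ≤ i' ∧ i' ≤ b' ∧ s i' = w} ∧
            q ∈ {w | ∃ i', b ≤ i' ∧ i' ≤ b' ∧ s i' = w} ∧
            T.beats p q ∧ T.colour p q = χ) (s b) z := hz
          induction hz with
          | single hrel =>
            exact stepcore _ _ hbeats hrel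
              (domIn_dom T (Relation.TransGen.single hrel))
          | tail hpre hrel ih2 =>
            exact stepcore _ _ ih2 hrel
              (domIn_dom T (Relation.TransGen.tail hpre hrel))
        exact hnb (prop (s b') hχpath)
      rcases hend with ⟨hb'n2, hfne⟩ | hb'n1
      · refine ih b' (by omega) hb'n2 (by omega) hb'beats (Or.inr ⟨by omega, ?_⟩)
        rw [hconst (b'-1) (by omega) (by omega)]
        exact fun hEq => hfne hEq.symm
      · rw [hb'n1] at hb'beats
        exact no_out_n1 hb'beats
  exact main n 1 le_rfl (by omega) (by omega) v_beats_1 (Or.inl rfl)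

end CTournament

/-- In a minimal counterexample every vertex is incident with
edges of all three colours. -/
theorem minimalCex_all_colours {V : Type*} [Fintype V] (T : CTournament V)
    (h : T.MinimalCex) :
    ∀ (v : V) (c : Fin 3), T.IncidentColour v c := by
  intro v c
  by_contra hmiss
  obtain ⟨hT3, hnodom, hmin⟩ := h
  refine CTournament.aux_false T hT3 hnodom hmin v c ?_ ?_
  · intro w hb hc
    exact hmiss ⟨w, Or.inl ⟨hb, hc⟩⟩
  · intro w hb hc
    exact hmiss ⟨w, Or.inr ⟨hb, hc⟩⟩
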